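/- Given a set of points colored with exactly two colors in a metric space, the minimum over feasible 2-diverse clusterings of the maximum cluster diameter equals the minimum value w such that the bipartite graph between the two color classes, with edges between points at distance ≤ w, has a perfect matching — provided the two color classes have equal size. -/

import Mathlib

open Finset

/-- With exactly two colors of equal class sizes, the minimum over feasible
2-diverse clusterings of the maximum cluster diameter equals the minimum `w`
such that the bipartite graph between the color classes with edges of length
`≤ w` has a perfect matching. -/
theorem stmt18 {V : Type*} [Fintype V] [DecidableEq V] [MetricSpace V]
    (c : V → Bool)
    (hsize : (Finset.univ.filter (fun v => c v = true)).card =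
             (Finset.univ.filter (fun v => c v = false)).card)
    (a b : ℝ)
    (ha : IsLeast {w : ℝ | ∃ P : Finpartition (Finset.univ : Finset V),
        ∀ p ∈ P.parts, (2 ≤ p.card ∧ Set.InjOn c ↑p) ∧
          ∀ u ∈ p, ∀ v ∈ p, dist u v ≤ w} a)
    (hb : IsLeast {w : ℝ | ∃ f : {v : V // c v = true} ≃ {v : V // c v = false},
        ∀ v : {v : V // c v = true}, dist v.1 (f v).1 ≤ w} b) :
    a = b := by
  by_cases hne : Nonempty {v : V // c v = true}
  · obtain ⟨v0⟩ := hne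
    obtain ⟨f, hf⟩ := hb.1
    have hb0 : 0 ≤ b := le_trans dist_nonneg (hf v0)
    -- direction a ≤ b : build a partition from the matching f
    have hab : a ≤ b := by
      apply ha.2
      have hne' : ∀ v : {v : V // c v = true}, v.1 ≠ (f v).1 := by
        intro v h
        have := (f v).2
        rw [← h, v.2] at this
        simp at this
      refine ⟨⟨Finset.univ.image
          (fun v : {v // c v = true} => ({v.1, (f v).1} : Finset V)), ?_, ?_, ?_⟩, ?_⟩
      · rw [Finset.supIndep_iff_pairwiseDisjoint]
        intro p hp q hq hpq
        simp only [coe_image, Set.mem_image, mem_coe, mem_univ] at hp hq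
        obtain ⟨v, -, rfl⟩ := hp
        obtain ⟨u, -, rfl⟩ := hq
        have hvu : v ≠ u := fun h => hpq (by rw [h])
        simp only [Function.onFun, id]
        rw [Finset.disjoint_left]
        intro x hx hx'
        simp only [mem_insert, mem_singleton] at hx hx'
        rcases hx with rfl | rfl <;> rcases hx' with h | h
        · exact hvu (Subtype.ext h)
        · have := (f u).2; rw [← h, v.2] at this; simp at this
        · have := (f v).2; rw [h, u.2] at this; simp at this
        · exact hvu (f.injective (Subtype.ext h))
      · apply Finset.eq_univ_of_forall
        intro w
        rw [Finset.mem_sup]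
        by_cases hw : c w = true
        · exact ⟨{w, (f ⟨w, hw⟩).1}, Finset.mem_image_of_mem _ (mem_univ (⟨w, hw⟩ : {v // c v = true})),
            mem_insert_self _ _⟩
        · have hw' : c w = false := by simpa using hw
          refine ⟨{(f.symm ⟨w, hw'⟩).1, (f (f.symm ⟨w, hw'⟩)).1},
            Finset.mem_image_of_mem _ (mem_univ _), ?_⟩
          rw [f.apply_symm_apply]
          exact mem_insert_of_mem (mem_singleton_self w)
      · intro h
        simp only [Finset.mem_image, mem_univ, true_and] at h
        obtain ⟨v, hv⟩ := h
        have : v.1 ∈ (⊥ : Finset V) := hv ▸ mem_insert_self _ _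
        exact absurd this (Finset.notMem_empty _)
      · intro p hp
        simp only [Finset.mem_image, mem_univ, true_and] at hp
        obtain ⟨v, rfl⟩ := hp
        refine ⟨⟨?_, ?_⟩, ?_⟩
        · rw [Finset.card_insert_of_notMem (by simpa using hne' v), Finset.card_singleton]
        · intro x hx y hy hxy
          simp only [coe_insert, coe_singleton, Set.mem_insert_iff, Set.mem_singleton_iff] at hx hy
          rcases hx with rfl | rfl <;> rcases hy with rfl | rfl
          · rfl
          · rw [v.2, (f v).2] at hxy; simp at hxy
          · rw [v.2, (f v).2] at hxy; simp at hxy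
          · rfl
        · intro u hu w hw
          simp only [mem_insert, mem_singleton] at hu hw
          rcases hu with rfl | rfl <;> rcases hw with rfl | rfl
          · simpa using hb0
          · exact hf v
          · rw [dist_comm]; exact hf v
          · simpa using hb0
    -- direction b ≤ a : build a matching from a partition
    have hba : b ≤ a := by
      apply hb.2
      obtain ⟨P, hP⟩ := ha.1
      have hcard : ∀ v : V, (P.part v).card = 2 := by
        intro v
        have hmem := P.part_mem.2 (mem_univ v)
        obtain ⟨⟨h2, hinj⟩, -⟩ := hP _ hmem
        refine le_antisymm ?_ h2
        calc (P.part v).card = ((P.part v).image c).card :=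
              (Finset.card_image_of_injOn hinj).symm
          _ ≤ Fintype.card Bool := Finset.card_le_univ _
          _ = 2 := by simp
      have herase : ∀ v : V, ∃ u, (P.part v).erase v = {u} := by
        intro v
        apply Finset.card_eq_one.mp
        rw [Finset.card_erase_of_mem (P.mem_part (mem_univ v)), hcard]
      choose g hg using herase
      have hgmem : ∀ v, g v ∈ (P.part v).erase v := fun v => (hg v) ▸ mem_singleton_self _
      have hgne : ∀ v, g v ≠ v := fun v => (Finset.mem_erase.mp (hgmem v)).1
      have hgpart : ∀ v, g v ∈ P.part v := fun v => (Finset.mem_erase.mp (hgmem v)).2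
      have hparteq : ∀ v, P.part (g v) = P.part v := by
        intro v
        exact P.eq_of_mem_parts (P.part_mem.2 (mem_univ _)) (P.part_mem.2 (mem_univ _))
          (P.mem_part (mem_univ _)) (hgpart v)
      have hgg : ∀ v, g (g v) = v := by
        intro v
        have h1 : v ∈ (P.part (g v)).erase (g v) := by
          rw [hparteq v]
          exact Finset.mem_erase.mpr ⟨Ne.symm (hgne v), P.mem_part (mem_univ v)⟩
        rw [hg (g v), mem_singleton] at h1
        exact h1.symm
      have hgc : ∀ v, c (g v) ≠ c v := by
        intro v h
        obtain ⟨⟨-, hinj⟩, -⟩ := hP _ (P.part_mem.2 (mem_univ v))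
        exact hgne v (hinj (hgpart v) (P.mem_part (mem_univ v)) h)
      refine ⟨⟨fun v => ⟨g v.1, ?_⟩, fun v => ⟨g v.1, ?_⟩, ?_, ?_⟩, ?_⟩
      · have := hgc v.1; rw [v.2] at this; simpa using this
      · have := hgc v.1; rw [v.2] at this; simpa using this
      · intro v; exact Subtype.ext (hgg v.1)
      · intro v; exact Subtype.ext (hgg v.1)
      · intro v
        obtain ⟨-, hd⟩ := hP _ (P.part_mem.2 (mem_univ v.1))
        exact hd _ (P.mem_part (mem_univ v.1)) _ (hgpart v.1)
    linarith
  · exfalso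
    obtain ⟨f, -⟩ := hb.1
    have : (b - 1) ∈ {w : ℝ | ∃ f : {v : V // c v = true} ≃ {v : V // c v = false},
        ∀ v : {v : V // c v = true}, dist v.1 (f v).1 ≤ w} :=
      ⟨f, fun v => absurd ⟨v⟩ hne⟩
    linarith [hb.2 this]
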